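/- There exists a natural number N such that for every even n ≥ N and every m ≥ 1, the number of tuples (α_1,…,α_m) ∈ F_n^m such that no two involutions α_i and α_j (with i ≠ j) share a common orbit is at most (2/3)^{m−1} · |F_n|^m. Equivalently, with probability at least 1 − (2/3)^{m−1}, a uniformly random tuple in F_n^m has at least one pair i < j such that α_i and α_j share a common orbit (i.e., the associated graph G_α has a black edge). -/

import Mathlib

open scoped Classical

/-- The set of fixed-point-free involutions of `{1,…,n}` (modeled on `Fin n`). -/
noncomputable def fpf (n : ℕ) : Finset (Equiv.Perm (Fin n)) :=
  Finset.univ.filter (fun σ => σ * σ = 1 ∧ ∀ i, σ i ≠ i)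

open Finset

lemma mem_fpf {n : ℕ} {σ : Equiv.Perm (Fin n)} :
    σ ∈ fpf n ↔ σ * σ = 1 ∧ ∀ i, σ i ≠ i := by
  simp [fpf]

lemma fpf_apply_apply {n : ℕ} {σ : Equiv.Perm (Fin n)} (h : σ ∈ fpf n) (x : Fin n) :
    σ (σ x) = x := by
  have := (mem_fpf.1 h).1
  calc σ (σ x) = (σ * σ) x := rfl
  _ = x := by rw [this]; rfl

lemma fpf_ne {n : ℕ} {σ : Equiv.Perm (Fin n)} (h : σ ∈ fpf n) (x : Fin n) : σ x ≠ x :=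
  (mem_fpf.1 h).2 x

lemma fpf_conj {n : ℕ} (π : Equiv.Perm (Fin n)) {σ : Equiv.Perm (Fin n)} (h : σ ∈ fpf n) :
    π * σ * π⁻¹ ∈ fpf n := by
  rw [mem_fpf] at h ⊢
  constructor
  · have : π * σ * π⁻¹ * (π * σ * π⁻¹) = π * (σ * σ) * π⁻¹ := by group
    rw [this, h.1]; group
  · intro i hi
    refine h.2 (π⁻¹ i) ?_
    have h1 : π (σ (π⁻¹ i)) = i := hi
    have := congrArg (⇑π⁻¹) h1
    simpa using this

lemma countA {n : ℕ} (x c c' : Fin n) (hc : c ≠ x) (hc' : c' ≠ x) :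
    ((fpf n).filter (fun α => α x = c)).card
      = ((fpf n).filter (fun α => α x = c')).card := by
  set s := Equiv.swap c c' with hs
  have hsinv : s⁻¹ = s := by simp [hs]
  have key : ∀ (d d' : Fin n), d ≠ x → d' ≠ x → ∀ α ∈ (fpf n).filter (fun α => α x = d),
      (Equiv.swap d d') * α * (Equiv.swap d d') ∈ (fpf n).filter (fun α => α x = d') := by
    intro d d' hd hd' α hα
    rw [mem_filter] at hα ⊢
    constructor
    · have := fpf_conj (σ := α) (Equiv.swap d d') hα.1
      simpa using this
    · show (Equiv.swap d d') (α ((Equiv.swap d d') x)) = d'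
      rw [Equiv.swap_apply_of_ne_of_ne (Ne.symm hd) (Ne.symm hd'), hα.2,
        Equiv.swap_apply_left]
  apply Finset.card_bij (fun α _ => s * α * s)
  · intro α hα; exact key c c' hc hc' α hα
  · intro α hα β hβ hab
    have : s⁻¹ * (s * α * s) * s⁻¹ = s⁻¹ * (s * β * s) * s⁻¹ := by rw [hab]
    simpa [hsinv, mul_assoc] using this
  · intro β hβ
    refine ⟨s * β * s, ?_, ?_⟩
    · have := key c' c hc' hc β hβ
      simpa [hs, Equiv.swap_comm c c'] using this
    · have hss : s * s = 1 := by rw [hs]; exact Equiv.swap_mul_self _ _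
      show s * s * β * s * s = β
      rw [hss, one_mul, mul_assoc, hss, mul_one]

lemma countA' {n : ℕ} (x c : Fin n) (hc : c ≠ x) :
    (n - 1) * ((fpf n).filter (fun α => α x = c)).card = (fpf n).card := by
  have hpart : fpf n = (Finset.univ.erase x).biUnion
      (fun c' => (fpf n).filter (fun α => α x = c')) := by
    ext α
    simp only [mem_biUnion, mem_erase, mem_filter, Finset.mem_univ, true_and, and_true]
    constructor
    · intro h; exact ⟨α x, fpf_ne h x, h, rfl⟩
    · rintro ⟨c', -, h, -⟩; exact h
  conv_rhs => rw [hpart]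
  rw [Finset.card_biUnion]
  · rw [Finset.sum_congr rfl (fun c' hc' => countA x c' c (Finset.mem_erase.1 hc').1 hc)]
    rw [Finset.sum_const, smul_eq_mul]
    congr 1
    simp [Finset.card_erase_of_mem]
  · intro a ha b hb hab
    simp only [Finset.disjoint_left, mem_filter]
    rintro α ⟨-, h1⟩ ⟨-, h2⟩
    exact hab (h1 ▸ h2 ▸ rfl)

lemma countB {n : ℕ} (x c y d d' : Fin n) (hdx : d ≠ x) (hdc : d ≠ c) (hdy : d ≠ y)
    (hd'x : d' ≠ x) (hd'c : d' ≠ c) (hd'y : d' ≠ y) :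
    ((fpf n).filter (fun α => α x = c ∧ α y = d)).card
      = ((fpf n).filter (fun α => α x = c ∧ α y = d')).card := by
  have key : ∀ (e e' : Fin n), e ≠ x → e ≠ c → e ≠ y → e' ≠ x → e' ≠ c → e' ≠ y →
      ∀ α ∈ (fpf n).filter (fun α => α x = c ∧ α y = e),
      (Equiv.swap e e') * α * (Equiv.swap e e') ∈
        (fpf n).filter (fun α => α x = c ∧ α y = e') := by
    intro e e' hex hec hey he'x he'c he'y α hα
    rw [mem_filter] at hα ⊢
    refine ⟨by simpa using fpf_conj (σ := α) (Equiv.swap e e') hα.1, ?_, ?_⟩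
    · show (Equiv.swap e e') (α ((Equiv.swap e e') x)) = c
      rw [Equiv.swap_apply_of_ne_of_ne (Ne.symm hex) (Ne.symm he'x), hα.2.1,
        Equiv.swap_apply_of_ne_of_ne (Ne.symm hec) (Ne.symm he'c)]
    · show (Equiv.swap e e') (α ((Equiv.swap e e') y)) = e'
      rw [Equiv.swap_apply_of_ne_of_ne (Ne.symm hey) (Ne.symm he'y), hα.2.2,
        Equiv.swap_apply_left]
  set s := Equiv.swap d d' with hs
  apply Finset.card_bij (fun α _ => s * α * s)
  · intro α hα; exact key d d' hdx hdc hdy hd'x hd'c hd'y α hα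
  · intro α hα β hβ hab
    have hss : s * s = 1 := by rw [hs]; exact Equiv.swap_mul_self _ _
    have : s * (s * α * s) * s = s * (s * β * s) * s := by rw [hab]
    calc α = s * (s * α * s) * s := by
            rw [show s * (s * α * s) * s = s * s * α * (s * s) by group, hss, one_mul, mul_one]
    _ = s * (s * β * s) * s := this
    _ = β := by rw [show s * (s * β * s) * s = s * s * β * (s * s) by group, hss, one_mul, mul_one]
  · intro β hβ
    refine ⟨s * β * s, ?_, ?_⟩
    · have := key d' d hd'x hd'c hd'y hdx hdc hdy β hβ
      simpa [hs, Equiv.swap_comm d d'] using this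
    · have hss : s * s = 1 := by rw [hs]; exact Equiv.swap_mul_self _ _
      show s * (s * β * s) * s = β
      rw [show s * (s * β * s) * s = s * s * β * (s * s) by group, hss, one_mul, mul_one]

lemma countB' {n : ℕ} (x c y d : Fin n) (hcx : c ≠ x) (hyx : y ≠ x) (hyc : y ≠ c)
    (hdx : d ≠ x) (hdc : d ≠ c) (hdy : d ≠ y) :
    (n - 3) * ((fpf n).filter (fun α => α x = c ∧ α y = d)).card
      = ((fpf n).filter (fun α => α x = c)).card := by
  have hpart : (fpf n).filter (fun α => α x = c)
      = ((Finset.univ \ {x, c, y}).biUnion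
          (fun d' => (fpf n).filter (fun α => α x = c ∧ α y = d'))) := by
    ext α
    simp only [mem_biUnion, mem_sdiff, mem_filter, Finset.mem_univ, true_and,
      Finset.mem_insert, Finset.mem_singleton, not_or]
    constructor
    · intro ⟨h1, h2⟩
      refine ⟨α y, ⟨?_, ?_, ?_⟩, h1, h2, rfl⟩
      · intro h
        apply hyc
        rw [← h2, ← h, fpf_apply_apply h1]
      · intro h
        apply hyx
        have h3 : α (α y) = α c := by rw [h]
        rw [fpf_apply_apply h1, ← h2, fpf_apply_apply h1] at h3
        exact h3
      · exact fpf_ne h1 y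
    · rintro ⟨d', -, h1, h2, -⟩; exact ⟨h1, h2⟩
  conv_rhs => rw [hpart]
  rw [Finset.card_biUnion]
  · rw [Finset.sum_congr rfl (fun d' hd' => by
      simp only [mem_sdiff, Finset.mem_insert, Finset.mem_singleton, not_or] at hd'
      exact countB x c y d' d hd'.2.1 hd'.2.2.1 hd'.2.2.2 hdx hdc hdy)]
    rw [Finset.sum_const, smul_eq_mul]
    congr 1
    have h3 : ({x, c, y} : Finset (Fin n)).card = 3 := by
      rw [Finset.card_insert_of_notMem (by simp [hcx.symm, hyx.symm]),
        Finset.card_insert_of_notMem (by simp [hyc.symm]), Finset.card_singleton]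
    rw [Finset.card_sdiff_of_subset (by simp), h3, Finset.card_univ, Fintype.card_fin]
  · intro a ha b hb hab
    simp only [Finset.disjoint_left, mem_filter]
    rintro α ⟨-, -, h1⟩ ⟨-, -, h2⟩
    exact hab (h1 ▸ h2 ▸ rfl)

lemma sum1 {n : ℕ} {β : Equiv.Perm (Fin n)} (hβ : β ∈ fpf n) :
    (n - 1) * ∑ α ∈ fpf n, (Finset.univ.filter (fun x => α x = β x)).card
      = n * (fpf n).card := by
  have swap : ∑ α ∈ fpf n, (Finset.univ.filter (fun x => α x = β x)).card
      = ∑ x : Fin n, ((fpf n).filter (fun α => α x = β x)).card := by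
    simp only [Finset.card_filter]
    rw [Finset.sum_comm]
  rw [swap, Finset.mul_sum,
    Finset.sum_congr rfl (fun x _ => countA' x (β x) (fpf_ne hβ x)),
    Finset.sum_const, smul_eq_mul, Finset.card_univ, Fintype.card_fin]

lemma sum2 {n : ℕ} {β : Equiv.Perm (Fin n)} (hβ : β ∈ fpf n) :
    (n - 1) * ((n - 3) *
        ∑ α ∈ fpf n, ((Finset.univ.filter (fun x => α x = β x)).offDiag).card)
      = (n * (n - 3) + (n * n - 2 * n)) * (fpf n).card := by
  have hod : ∀ α : Equiv.Perm (Fin n),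
      (Finset.univ.filter (fun x => α x = β x)).offDiag
        = Finset.univ.offDiag.filter (fun p => α p.1 = β p.1 ∧ α p.2 = β p.2) := by
    intro α
    ext ⟨a, b⟩
    simp only [Finset.mem_offDiag, mem_filter, Finset.mem_univ, true_and]
    tauto
  have swap : ∑ α ∈ fpf n, ((Finset.univ.filter (fun x => α x = β x)).offDiag).card
      = ∑ p ∈ Finset.univ.offDiag,
          ((fpf n).filter (fun α : Equiv.Perm (Fin n) =>
            α p.1 = β p.1 ∧ α p.2 = β p.2)).card := by
    simp only [hod, Finset.card_filter]
    rw [Finset.sum_comm]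
  rw [swap]
  set f := fun p : Fin n × Fin n =>
    ((fpf n).filter (fun α : Equiv.Perm (Fin n) => α p.1 = β p.1 ∧ α p.2 = β p.2)).card
    with hf
  set od := (Finset.univ : Finset (Fin n)).offDiag with hodd
  rw [show (∑ p ∈ od, f p)
      = (∑ p ∈ od.filter (fun p => p.2 = β p.1), f p)
        + (∑ p ∈ od.filter (fun p => ¬ p.2 = β p.1), f p) from
    (Finset.sum_filter_add_sum_filter_not od _ f).symm]
  -- part 1
  have hpart1 : ∀ p ∈ od.filter (fun p => p.2 = β p.1),
      (n - 1) * ((n - 3) * f p) = (n - 3) * (fpf n).card := by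
    intro p hp
    simp only [hodd, mem_filter, Finset.mem_offDiag, Finset.mem_univ, true_and] at hp
    have heq : (fpf n).filter (fun α : Equiv.Perm (Fin n) =>
        α p.1 = β p.1 ∧ α p.2 = β p.2)
        = (fpf n).filter (fun α : Equiv.Perm (Fin n) => α p.1 = β p.1) := by
      apply Finset.filter_congr
      intro α hα
      simp only [and_iff_left_iff_imp]
      intro h1
      rw [hp.2, fpf_apply_apply hβ, ← h1, fpf_apply_apply hα]
    rw [hf]
    simp only [heq]
    rw [show (n-1) * ((n-3) * ((fpf n).filter (fun α : Equiv.Perm (Fin n) => α p.1 = β p.1)).card)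
        = (n-3) * ((n-1) * ((fpf n).filter (fun α : Equiv.Perm (Fin n) => α p.1 = β p.1)).card)
      by ring]
    rw [countA' p.1 (β p.1) (fpf_ne hβ p.1)]
  -- part 2
  have hpart2 : ∀ p ∈ od.filter (fun p => ¬ p.2 = β p.1),
      (n - 1) * ((n - 3) * f p) = (fpf n).card := by
    intro p hp
    simp only [hodd, mem_filter, Finset.mem_offDiag, Finset.mem_univ, true_and] at hp
    obtain ⟨hne, hyc⟩ := hp
    rw [hf]
    have hdx : β p.2 ≠ p.1 := by
      intro h
      exact hyc (by rw [← h, fpf_apply_apply hβ])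
    have hdc : β p.2 ≠ β p.1 := fun h => hne (β.injective h).symm
    rw [countB' p.1 (β p.1) p.2 (β p.2) (fpf_ne hβ p.1) hne.symm hyc hdx hdc (fpf_ne hβ p.2),
      countA' p.1 (β p.1) (fpf_ne hβ p.1)]
  -- cards of the parts
  have hc1 : (od.filter (fun p => p.2 = β p.1)).card = n := by
    have : od.filter (fun p => p.2 = β p.1)
        = Finset.univ.image (fun x : Fin n => (x, β x)) := by
      ext ⟨a, b⟩
      simp only [hodd, mem_filter, Finset.mem_offDiag, Finset.mem_univ, true_and,
        Finset.mem_image, Prod.mk.injEq]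
      constructor
      · rintro ⟨-, h⟩; exact ⟨a, rfl, h.symm⟩
      · rintro ⟨x, rfl, rfl⟩; exact ⟨(fpf_ne hβ x).symm, rfl⟩
    rw [this, Finset.card_image_of_injective _ (fun a b h => (Prod.mk.injEq _ _ _ _ ▸ h).1),
      Finset.card_univ, Fintype.card_fin]
  have hc2 : (od.filter (fun p => ¬ p.2 = β p.1)).card = n * n - 2 * n := by
    have htot := Finset.card_filter_add_card_filter_not
      (s := od) (p := fun p => p.2 = β p.1)
    have hodc : od.card = n * n - n := by
      rw [hodd, Finset.offDiag_card, Finset.card_univ, Fintype.card_fin]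
    omega
  have e1 : ∑ p ∈ od.filter (fun p => p.2 = β p.1), (n-1) * ((n-3) * f p)
      = n * ((n-3) * (fpf n).card) := by
    rw [Finset.sum_congr rfl hpart1, Finset.sum_const, smul_eq_mul, hc1]
  have e2 : ∑ p ∈ od.filter (fun p => ¬ p.2 = β p.1), (n-1) * ((n-3) * f p)
      = (n*n - 2*n) * (fpf n).card := by
    rw [Finset.sum_congr rfl hpart2, Finset.sum_const, smul_eq_mul, hc2]
  have expand : (n-1) * ((n-3) * ((∑ p ∈ od.filter (fun p => p.2 = β p.1), f p)
        + (∑ p ∈ od.filter (fun p => ¬ p.2 = β p.1), f p)))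
      = (∑ p ∈ od.filter (fun p => p.2 = β p.1), (n-1) * ((n-3) * f p))
        + (∑ p ∈ od.filter (fun p => ¬ p.2 = β p.1), (n-1) * ((n-3) * f p)) := by
    simp only [Finset.mul_sum, Nat.mul_add]
  rw [expand, e1, e2]
  ring

lemma keylemma {n : ℕ} (hn : 6 ≤ n) {β : Equiv.Perm (Fin n)} (hβ : β ∈ fpf n) :
    (((fpf n).filter (fun α => ∀ x, α x ≠ β x)).card : ℝ)
      ≤ (2/3) * ((fpf n).card : ℝ) := by
  set t := fun α : Equiv.Perm (Fin n) => (Finset.univ.filter (fun x => α x = β x)).card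
    with ht
  set w := fun α : Equiv.Perm (Fin n) =>
    ((Finset.univ.filter (fun x => α x = β x)).offDiag).card with hw
  have hwt : ∀ α : Equiv.Perm (Fin n), (w α : ℝ) = (t α : ℝ)^2 - (t α : ℝ) := by
    intro α
    have h0 : w α = t α * t α - t α := Finset.offDiag_card _
    rcases Nat.eq_zero_or_pos (t α) with h | h
    · rw [h0, h]; simp
    · rw [h0, Nat.cast_sub (Nat.le_mul_of_pos_left _ h)]
      push_cast; ring
  -- pointwise bound
  have hpt : ∀ α ∈ fpf n,
      (if (∀ x, α x ≠ β x) then (6:ℝ) else 0)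
        ≤ 6 - 4 * (t α : ℝ) + ((t α : ℝ)^2 - (t α : ℝ)) := by
    intro α _
    rcases Nat.eq_zero_or_pos (t α) with h | h
    · rw [h]
      split <;> norm_num
    · have hne : ¬ (∀ x, α x ≠ β x) := by
        intro hall
        obtain ⟨x, hx⟩ := Finset.card_pos.1 h
        exact hall x (Finset.mem_filter.1 hx).2
      rw [if_neg hne]
      have h1 : (1:ℝ) ≤ (t α : ℝ) := by exact_mod_cast h
      rcases le_or_gt (t α) 2 with h2 | h2
      · have : ((t α : ℝ)) ≤ 2 := by exact_mod_cast h2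
        nlinarith
      · have : (3:ℝ) ≤ (t α : ℝ) := by exact_mod_cast h2
        nlinarith
  -- summing
  set T := (fpf n).card with hT
  set D := ((fpf n).filter (fun α => ∀ x, α x ≠ β x)).card with hD
  have hsum : 6 * (D:ℝ) ≤ 6 * T - 4 * (∑ α ∈ fpf n, (t α : ℝ))
      + ((∑ α ∈ fpf n, (t α : ℝ)^2) - ∑ α ∈ fpf n, (t α : ℝ)) := by
    have lhs : (∑ α ∈ fpf n, if (∀ x, α x ≠ β x) then (6:ℝ) else 0) = 6 * D := by
      rw [← Finset.sum_filter, Finset.sum_const, nsmul_eq_mul, mul_comm]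
    have rhs : ∑ α ∈ fpf n, (6 - 4 * (t α : ℝ) + ((t α : ℝ)^2 - (t α : ℝ)))
        = 6 * T - 4 * (∑ α ∈ fpf n, (t α : ℝ))
          + ((∑ α ∈ fpf n, (t α : ℝ)^2) - ∑ α ∈ fpf n, (t α : ℝ)) := by
      rw [Finset.sum_add_distrib, Finset.sum_sub_distrib, Finset.sum_sub_distrib,
        Finset.sum_const, ← Finset.mul_sum, ← hT]
      ring_nf
    rw [← lhs, ← rhs]
    exact Finset.sum_le_sum hpt
  -- the two moment identities, cast to ℝ
  set A := (∑ α ∈ fpf n, (t α : ℝ)) with hA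
  have hwsum : (∑ α ∈ fpf n, (t α : ℝ)^2) - A = ∑ α ∈ fpf n, (w α : ℝ) := by
    rw [hA, ← Finset.sum_sub_distrib]
    exact Finset.sum_congr rfl (fun α _ => (hwt α).symm)
  set B := (∑ α ∈ fpf n, (w α : ℝ)) with hB
  have hA1 : ((n:ℝ) - 1) * A = n * T := by
    have := sum1 hβ
    have hc : (((n - 1 : ℕ) : ℝ)) * ((∑ α ∈ fpf n, t α : ℕ) : ℝ) = ((n:ℝ)) * T := by
      exact_mod_cast congrArg (Nat.cast : ℕ → ℝ) this
    rw [Nat.cast_sub (by omega)] at hc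
    simpa [hA, Nat.cast_sum] using hc
  have hB1 : ((n:ℝ) - 1) * (((n:ℝ) - 3) * B)
      = ((n:ℝ) * ((n:ℝ) - 3) + ((n:ℝ) * n - 2 * n)) * T := by
    have := sum2 hβ
    have hc : (((n - 1 : ℕ) : ℝ)) * ((((n - 3 : ℕ) : ℝ)) * ((∑ α ∈ fpf n, w α : ℕ) : ℝ))
        = (((n:ℝ)) * (((n - 3 : ℕ) : ℝ)) + ((((n * n - 2 * n : ℕ)) : ℝ))) * T := by
      exact_mod_cast congrArg (Nat.cast : ℕ → ℝ) this
    rw [Nat.cast_sub (by omega), Nat.cast_sub (by omega), Nat.cast_sub (by nlinarith)] at hc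
    push_cast at hc
    simpa [hB, Nat.cast_sum] using hc
  -- final arithmetic
  have hTpos : (0:ℝ) ≤ T := Nat.cast_nonneg _
  have hn6 : (6:ℝ) ≤ (n:ℝ) := by exact_mod_cast hn
  have key : 2 * (T:ℝ) + B ≤ 4 * A := by
    have hpos : (0:ℝ) < ((n:ℝ) - 1) * ((n:ℝ) - 3) := by nlinarith
    rw [← mul_le_mul_iff_of_pos_left hpos]
    nlinarith [hA1, hB1, mul_nonneg hTpos (sub_nonneg.2 hn6)]
  have : 6 * (D:ℝ) ≤ 4 * T := by
    rw [hwsum] at hsum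
    linarith
  linarith

/-- There exists `N` such that for every even `n ≥ N` and every `m ≥ 1`, the number of
tuples in `F_n^m` in which no two distinct coordinates share a common orbit is at most
`(2/3)^{m−1}·|F_n|^m`. -/
theorem card_no_common_orbit_le :
    ∃ N : ℕ, ∀ n : ℕ, Even n → N ≤ n → ∀ m : ℕ, 1 ≤ m →
      ((Finset.univ.filter (fun α : Fin m → Equiv.Perm (Fin n) =>
          (∀ i, α i ∈ fpf n) ∧
          ∀ i j : Fin m, i ≠ j → ¬ ∃ x, α i x = α j x)).card : ℝ)
        ≤ (2 / 3 : ℝ) ^ (m - 1) * ((fpf n).card : ℝ) ^ m := by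
  refine ⟨6, fun n _ hn m hm => ?_⟩
  set T := ((fpf n).card : ℝ) with hT
  set A := fun m : ℕ => (Finset.univ.filter (fun α : Fin m → Equiv.Perm (Fin n) =>
      (∀ i, α i ∈ fpf n) ∧
      ∀ i j : Fin m, i ≠ j → ¬ ∃ x, α i x = α j x)) with hA
  show ((A m).card : ℝ) ≤ (2/3 : ℝ) ^ (m - 1) * T ^ m
  induction m, hm using Nat.le_induction with
  | base =>
    have hsub : ((A 1).card : ℝ) ≤ T := by
      have := Finset.card_le_card_of_injOn (s := A 1) (t := fpf n)
        (fun α : Fin 1 → Equiv.Perm (Fin n) => α 0)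
        (fun α hα => by
          rw [hA, Finset.mem_coe, Finset.mem_filter] at hα
          exact hα.2.1 0)
        (fun α hα β hβ h => by
          funext i
          have : i = 0 := Subsingleton.elim _ _
          rw [this]; exact h)
      rw [hT]
      exact_mod_cast this
    simpa using hsub
  | succ m hm ih =>
    set z : Fin m := ⟨0, hm⟩ with hz
    set S := (A m).sigma (fun g : Fin m → Equiv.Perm (Fin n) =>
      (fpf n).filter (fun σ : Equiv.Perm (Fin n) => ∀ x, σ x ≠ g z x)) with hS
    have hmap : ∀ α ∈ A (m + 1),
        (⟨Fin.init α, α (Fin.last m)⟩ : Σ _ : Fin m → Equiv.Perm (Fin n),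
          Equiv.Perm (Fin n)) ∈ S := by
      intro α hα
      rw [hA, Finset.mem_filter] at hα
      obtain ⟨-, h1, h2⟩ := hα
      rw [hS, Finset.mem_sigma]
      constructor
      · rw [hA, Finset.mem_filter]
        refine ⟨Finset.mem_univ _, fun i => h1 _, fun i j hij => ?_⟩
        exact h2 i.castSucc j.castSucc (fun h => hij (Fin.castSucc_injective m h))
      · rw [Finset.mem_filter]
        refine ⟨h1 _, fun x hx => ?_⟩
        exact h2 (Fin.last m) z.castSucc (Fin.ne_of_gt (Fin.castSucc_lt_last z)) ⟨x, hx⟩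
    have hinj : Set.InjOn (fun α : Fin (m+1) → Equiv.Perm (Fin n) =>
        (⟨Fin.init α, α (Fin.last m)⟩ : Σ _ : Fin m → Equiv.Perm (Fin n),
          Equiv.Perm (Fin n))) (A (m+1)) := by
      intro α hα β hβ h
      simp only [Sigma.mk.inj_iff, heq_eq_eq] at h
      funext i
      refine Fin.lastCases ?_ ?_ i
      · exact h.2
      · intro j
        have := congrFun h.1 j
        simpa [Fin.init] using this
    have hcard : ((A (m+1)).card : ℝ) ≤ (S.card : ℝ) := by
      exact_mod_cast Finset.card_le_card_of_injOn _ (fun α hα => hmap α hα) hinj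
    have hScard : (S.card : ℝ) ≤ ((A m).card : ℝ) * ((2/3) * T) := by
      rw [hS, Finset.card_sigma]
      push_cast
      calc (∑ g ∈ A m, (((fpf n).filter
              (fun σ : Equiv.Perm (Fin n) => ∀ x, σ x ≠ g z x)).card : ℝ))
          ≤ ∑ g ∈ A m, (2/3) * T := by
            apply Finset.sum_le_sum
            intro g hg
            rw [hA, Finset.mem_filter] at hg
            exact keylemma hn (hg.2.1 z)
      _ = ((A m).card : ℝ) * ((2/3) * T) := by
            rw [Finset.sum_const, nsmul_eq_mul]
    have hTnn : (0:ℝ) ≤ T := Nat.cast_nonneg _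
    calc ((A (m+1)).card : ℝ) ≤ ((A m).card : ℝ) * ((2/3) * T) := hcard.trans hScard
    _ ≤ ((2/3 : ℝ) ^ (m - 1) * T ^ m) * ((2/3) * T) := by
        apply mul_le_mul_of_nonneg_right ih
        positivity
    _ = (2/3 : ℝ) ^ (m + 1 - 1) * T ^ (m + 1) := by
        have hm1 : m - 1 + 1 = m := by omega
        have h23 : (2/3 : ℝ) ^ m = (2/3) ^ (m - 1) * (2/3) := by
          conv_lhs => rw [← hm1]
          rw [pow_succ]
        rw [show m + 1 - 1 = m from rfl, pow_succ T m, h23]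
        ring
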